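/- Let g_q be as above and suppose 2 ≤ q ≤ 3, μ ≥ 1, and x, y ∈ [0,1] with x ≥ y and x² + y² ≤ 1. Then g_q(x²+y²)^μ ≥ g_q(x²)^μ + (μ²/(μ+1))·g_q(x²)^(μ−1)·g_q(y²) + (2^μ − μ²/(μ+1) − 1)·g_q(y²)^μ. -/

import Mathlib

open Real Set

lemma bern01 {x p : ℝ} (hx : 0 ≤ x) (hp0 : 0 ≤ p) (hp1 : p ≤ 1) :
    (1 + x) ^ p ≤ 1 + p * x := by
  have h := Real.geom_mean_le_arith_mean2_weighted hp0 (by linarith : (0:ℝ) ≤ 1 - p)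
    (by linarith : (0:ℝ) ≤ 1 + x) zero_le_one (by ring)
  calc (1 + x) ^ p = (1 + x) ^ p * 1 ^ (1 - p) := by simp
    _ ≤ p * (1 + x) + (1 - p) * 1 := h
    _ = 1 + p * x := by ring

lemma I1 {t p : ℝ} (ht0 : 0 < t) (ht1 : t ≤ 1) (hp0 : 0 ≤ p) (hp1 : p ≤ 1) :
    1 ≤ t ^ p + p * t ^ (p - 1) * (1 - t) := by
  have hb : (1 / t) ^ p ≤ 1 + p * ((1 - t) / t) := by
    have := bern01 (x := (1 - t) / t) (div_nonneg (by linarith) ht0.le) hp0 hp1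
    rwa [show 1 + (1 - t) / t = 1 / t by field_simp; ring] at this
  have key := mul_le_mul_of_nonneg_right hb (Real.rpow_nonneg ht0.le p)
  have h1 : (1 / t) ^ p * t ^ p = 1 := by
    rw [← Real.mul_rpow (by positivity) ht0.le, one_div, inv_mul_cancel₀ ht0.ne', Real.one_rpow]
  have h2 : t ^ p / t = t ^ (p - 1) := (Real.rpow_sub_one ht0.ne' p).symm
  calc (1:ℝ) = (1 / t) ^ p * t ^ p := h1.symm
    _ ≤ (1 + p * ((1 - t) / t)) * t ^ p := key
    _ = t ^ p + p * (t ^ p / t) * (1 - t) := by ring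
    _ = t ^ p + p * t ^ (p - 1) * (1 - t) := by rw [h2]

lemma psi_nonneg {r : ℝ} (hr1 : 1 ≤ r) (hr2 : r ≤ 2) {t : ℝ} (ht0 : 0 < t) (ht1 : t ≤ 1) :
    r * (1 + t ^ (r - 1)) * (1 - t) ≤ 2 * (1 - t ^ r) := by
  rcases eq_or_lt_of_le ht1 with rfl | ht1'
  · simp
  set ψ : ℝ → ℝ := fun s => 2 * (1 - s ^ r) - r * ((1 + s ^ (r - 1)) * (1 - s)) with hψdef
  have hd : ∀ s : ℝ, 0 < s → HasDerivAt ψ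
      (r * (1 - s ^ (r - 1) - (r - 1) * s ^ (r - 1 - 1) * (1 - s))) s := by
    intro s hs
    have h1 : HasDerivAt (fun u : ℝ => u ^ r) (r * s ^ (r - 1)) s :=
      Real.hasDerivAt_rpow_const (Or.inl hs.ne')
    have h2 : HasDerivAt (fun u : ℝ => u ^ (r - 1)) ((r - 1) * s ^ (r - 1 - 1)) s :=
      Real.hasDerivAt_rpow_const (Or.inl hs.ne')
    have h3 : HasDerivAt (fun u : ℝ => 1 - u ^ r) (-(r * s ^ (r - 1))) s := by
      simpa using (h1.const_sub 1)
    have h4 : HasDerivAt (fun u : ℝ => 1 + u ^ (r - 1)) ((r - 1) * s ^ (r - 1 - 1)) s := by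
      simpa using h2.const_add 1
    have h5 : HasDerivAt (fun u : ℝ => 1 - u) (-1 : ℝ) s := by
      simpa using (hasDerivAt_id s).const_sub 1
    have h6 := (h3.const_mul 2).sub (((h4.mul h5)).const_mul r)
    refine h6.congr_deriv ?_
    ring
  have h1val : ψ 1 = 0 := by simp [hψdef]
  have key : AntitoneOn ψ (Icc t 1) := by
    apply antitoneOn_of_deriv_nonpos (convex_Icc t 1)
    · exact fun s hs => ((hd s (lt_of_lt_of_le ht0 hs.1)).continuousAt).continuousWithinAt
    · intro s hs
      rw [interior_Icc] at hs
      exact ((hd s (ht0.trans hs.1)).differentiableAt).differentiableWithinAt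
    · intro s hs
      rw [interior_Icc] at hs
      have hs0 : 0 < s := ht0.trans hs.1
      rw [(hd s hs0).deriv]
      have := I1 (t := s) (p := r - 1) hs0 (by linarith [hs.2] : s ≤ 1) (by linarith) (by linarith)
      nlinarith [this, hr1]
  have := key (left_mem_Icc.mpr ht1) (right_mem_Icc.mpr ht1) ht1
  rw [h1val] at this
  simp only [hψdef] at this
  linarith

lemma I2 {r a b : ℝ} (hr1 : 1 ≤ r) (hr2 : r ≤ 2) (hb : 0 < b) (hba : b ≤ a) :
    r * (a ^ (r - 1) + b ^ (r - 1)) * (a - b) ≤ 2 * (a ^ r - b ^ r) := by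
  have ha : 0 < a := hb.trans_le hba
  have ht0 : 0 < b / a := div_pos hb ha
  have ht1 : b / a ≤ 1 := (div_le_one ha).mpr hba
  have h := psi_nonneg hr1 hr2 ht0 ht1
  have hmul := mul_le_mul_of_nonneg_left h (Real.rpow_pos_of_pos ha r).le
  have e1 : (b / a) ^ (r - 1) = b ^ (r - 1) / a ^ (r - 1) := Real.div_rpow hb.le ha.le _
  have e2 : (b / a) ^ r = b ^ r / a ^ r := Real.div_rpow hb.le ha.le _
  have ea : a ^ r = a ^ (r - 1) * a := by
    rw [Real.rpow_sub_one ha.ne' r]; field_simp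
  have eb : b ^ r = b ^ (r - 1) * b := by
    rw [Real.rpow_sub_one hb.ne' r]; field_simp
  have hA : (0:ℝ) < a ^ (r - 1) := Real.rpow_pos_of_pos ha _
  rw [e1, e2, ea, eb] at hmul
  have lhs_eq : a ^ (r - 1) * a * (r * (1 + b ^ (r - 1) / a ^ (r - 1)) * (1 - b / a))
      = r * (a ^ (r - 1) + b ^ (r - 1)) * (a - b) := by
    field_simp
  have rhs_eq : a ^ (r - 1) * a * (2 * (1 - b ^ (r - 1) * b / (a ^ (r - 1) * a)))
      = 2 * (a ^ (r - 1) * a - b ^ (r - 1) * b) := by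
    field_simp
  rw [lhs_eq, rhs_eq] at hmul
  rw [ea, eb]
  exact hmul

lemma concave_min {f : ℝ → ℝ} {a b x : ℝ} (hab : a ≤ b) (hf : ConcaveOn ℝ (Icc a b) f)
    (hx : x ∈ Icc a b) : min (f a) (f b) ≤ f x :=
  hf.ge_on_segment (left_mem_Icc.mpr hab) (right_mem_Icc.mpr hab)
    (by rwa [segment_eq_Icc hab])

lemma I3 {μ : ℝ} (hμ1 : 1 ≤ μ) :
    μ * 2 ^ (μ - 1) - μ ^ 2 / (μ + 1) - (2 ^ μ - μ ^ 2 / (μ + 1) - 1) * μ ≤ 0 := by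
  have hL : (0.6931471803 : ℝ) < Real.log 2 := Real.log_two_gt_d9
  set L := Real.log 2 with hLdef
  have hLpos : 0 < L := by linarith
  have hs0 : 0 ≤ μ - 1 := by linarith
  have hE : (2:ℝ) ^ (μ - 1) = Real.exp (L * (μ - 1)) := by
    rw [Real.rpow_def_of_pos (by norm_num : (0:ℝ) < 2)]
  have h2μ : (2:ℝ) ^ μ = 2 * 2 ^ (μ - 1) := by
    rw [show μ = 1 + (μ - 1) by ring, Real.rpow_add (by norm_num : (0:ℝ) < 2)]
    simp
  have hexp3 : Real.exp (L * (μ - 1)) = Real.exp (L * (μ - 1) / 3) ^ (3:ℕ) := by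
    rw [← Real.exp_nat_mul]
    congr 1
    push_cast
    ring
  have hEge : (1 + L * (μ - 1) / 3) ^ (3:ℕ) ≤ (2:ℝ) ^ (μ - 1) := by
    rw [hE, hexp3]
    apply pow_le_pow_left₀ (by positivity)
    linarith [Real.add_one_le_exp (L * (μ - 1) / 3)]
  have hc1 : 0 < 2 * L - 1 := by linarith
  have hc2 : 0 ≤ L + 2 * L ^ 2 / 3 - 1 := by nlinarith
  have step : μ ^ 2 + 1 ≤ (μ + 1) * (1 + L * (μ - 1) / 3) ^ (3:ℕ) := by
    have h1 : (μ + 1) * (1 + L * (μ - 1) / 3) ^ (3:ℕ) - (μ ^ 2 + 1)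
        = (μ - 1) * (2 * L - 1) + (μ - 1) ^ 2 * (L + 2 * L ^ 2 / 3 - 1)
          + (μ - 1) ^ 3 * (L ^ 2 / 3 + 2 * L ^ 3 / 27) + (μ - 1) ^ 4 * (L ^ 3 / 27) := by
      ring
    have t1 : 0 ≤ (μ - 1) * (2 * L - 1) := mul_nonneg hs0 hc1.le
    have t2 : 0 ≤ (μ - 1) ^ 2 * (L + 2 * L ^ 2 / 3 - 1) := mul_nonneg (by positivity) hc2
    have t3 : 0 ≤ (μ - 1) ^ 3 * (L ^ 2 / 3 + 2 * L ^ 3 / 27) :=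
      mul_nonneg (pow_nonneg hs0 3) (by positivity)
    have t4 : 0 ≤ (μ - 1) ^ 4 * (L ^ 3 / 27) := mul_nonneg (by positivity) (by positivity)
    linarith
  have hkey : μ ^ 2 + 1 ≤ (μ + 1) * 2 ^ (μ - 1) :=
    step.trans (mul_le_mul_of_nonneg_left hEge (by linarith))
  have hμ1pos : (0:ℝ) < μ + 1 := by linarith
  rw [h2μ]
  have h4 : μ ^ 2 / (μ + 1) * (μ + 1) = μ ^ 2 := by field_simp
  nlinarith [mul_le_mul_of_nonneg_left hkey (by linarith : (0:ℝ) ≤ μ),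
    Real.rpow_nonneg (by norm_num : (0:ℝ) ≤ 2) (μ - 1), h4]

lemma cpow_cont {p : ℝ} (hp : 0 ≤ p) : Continuous (fun x : ℝ => x ^ p) :=
  continuous_iff_continuousAt.mpr (fun x => Real.continuousAt_rpow_const x p (Or.inr hp))

set_option maxHeartbeats 2000000 in
lemma Hineq {μ : ℝ} (hμ : 1 ≤ μ) {t : ℝ} (ht0 : 0 ≤ t) (ht1 : t ≤ 1) :
    1 + (μ^2/(μ+1)) * t + (2^μ - μ^2/(μ+1) - 1) * t^μ ≤ (1+t)^μ := by
  rcases eq_or_lt_of_le hμ with rfl | hμ1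
  · simp only [Real.rpow_one]
    norm_num
    linarith
  have hμpos : (0:ℝ) < μ := by linarith
  set c1 : ℝ := μ^2/(μ+1) with hc1def
  set c2 : ℝ := 2^μ - c1 - 1 with hc2def
  set H : ℝ → ℝ := fun x => (1+x)^μ - 1 - c1*x - c2*x^μ with hHdef
  set H1 : ℝ → ℝ := fun x => μ*(1+x)^(μ-1) - c1 - c2*(μ*x^(μ-1)) with hH1def
  set H2 : ℝ → ℝ := fun x => (μ*(μ-1)) * ((1+x)^(μ-1-1) - c2*x^(μ-1-1)) with hH2def
  have hasH : ∀ x : ℝ, 0 ≤ x → HasDerivAt H (H1 x) x := by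
    intro x hx
    have h1p : HasDerivAt (fun y : ℝ => 1 + y) 1 x := by
      simpa using (hasDerivAt_id x).const_add (1:ℝ)
    have hpow : HasDerivAt (fun y : ℝ => y ^ μ) (μ * (1+x)^(μ-1)) (1+x) :=
      Real.hasDerivAt_rpow_const (Or.inl (by positivity))
    have hcomp : HasDerivAt (fun y : ℝ => (1+y) ^ μ) (μ * (1+x)^(μ-1) * 1) x :=
      hpow.comp x h1p
    have htpow : HasDerivAt (fun y : ℝ => y ^ μ) (μ * x^(μ-1)) x :=
      Real.hasDerivAt_rpow_const (Or.inr hμ)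
    have := ((hcomp.sub_const 1).sub ((hasDerivAt_id x).const_mul c1)).sub
      (htpow.const_mul c2)
    refine this.congr_deriv ?_
    ring
  have hasH1 : ∀ x : ℝ, 0 < x → HasDerivAt H1 (H2 x) x := by
    intro x hx
    have h1p : HasDerivAt (fun y : ℝ => 1 + y) 1 x := by
      simpa using (hasDerivAt_id x).const_add (1:ℝ)
    have hpow : HasDerivAt (fun y : ℝ => y ^ (μ-1)) ((μ-1) * (1+x)^(μ-1-1)) (1+x) :=
      Real.hasDerivAt_rpow_const (Or.inl (by positivity))
    have hcomp : HasDerivAt (fun y : ℝ => (1+y) ^ (μ-1)) ((μ-1) * (1+x)^(μ-1-1) * 1) x :=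
      hpow.comp x h1p
    have htpow : HasDerivAt (fun y : ℝ => y ^ (μ-1)) ((μ-1) * x^(μ-1-1)) x :=
      Real.hasDerivAt_rpow_const (Or.inl hx.ne')
    have := (hcomp.const_mul μ).sub_const c1 |>.sub ((htpow.const_mul μ).const_mul c2)
    refine this.congr_deriv ?_
    ring
  have contH : Continuous H := by
    apply Continuous.sub
    apply Continuous.sub
    apply Continuous.sub
    · exact (cpow_cont hμpos.le).comp (continuous_const.add continuous_id)
    · exact continuous_const
    · exact continuous_const.mul continuous_id
    · exact continuous_const.mul (cpow_cont hμpos.le)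
  have contH1 : Continuous H1 := by
    apply Continuous.sub
    apply Continuous.sub
    · exact continuous_const.mul ((cpow_cont (by linarith)).comp (continuous_const.add continuous_id))
    · exact continuous_const
    · exact continuous_const.mul (continuous_const.mul (cpow_cont (by linarith)))
  have hH0 : H 0 = 0 := by
    simp [hHdef, Real.zero_rpow hμpos.ne', Real.one_rpow]
  have hH1v : H 1 = 0 := by
    simp only [hHdef]
    norm_num
    rw [hc2def]
    ring
  have hH1_0 : H1 0 = μ - c1 := by
    simp [hH1def, Real.zero_rpow (by linarith : μ - 1 ≠ 0), Real.one_rpow]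
  have hμc1 : 0 ≤ μ - c1 := by
    have : μ - c1 = μ/(μ+1) := by rw [hc1def]; field_simp; ring
    rw [this]; positivity
  have hH1_1 : H1 1 ≤ 0 := by
    have e : H1 1 = μ * 2^(μ-1) - c1 - c2 * μ := by
      simp [hH1def, Real.one_rpow]
      norm_num
    rw [e, hc2def, hc1def]
    linarith [I3 hμ]
  suffices hfin : 0 ≤ H t by
    simp only [hHdef] at hfin
    linarith
  rcases le_total 2 μ with hc2μ | hcμ2
  · -- case 2 ≤ μ
    have hμμ : 0 < μ * (μ - 1) := by nlinarith
    have hXnn : 0 ≤ μ - 1 - 1 := by linarith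
    have DC : ∀ s u : ℝ, 0 < s → s ≤ u → 0 ≤ H2 u → 0 ≤ H2 s := by
      intro s u hs hsu hH2u
      have hupos : 0 < u := lt_of_lt_of_le hs hsu
      have h1 : c2 * u ^ (μ-1-1) ≤ (1+u) ^ (μ-1-1) := by
        simp only [hH2def] at hH2u
        nlinarith [hH2u]
      have hmono : ((1+u)*s) ^ (μ-1-1) ≤ ((1+s)*u) ^ (μ-1-1) :=
        Real.rpow_le_rpow (by positivity) (by nlinarith) hXnn
      rw [Real.mul_rpow (by positivity) hs.le, Real.mul_rpow (by positivity) hupos.le] at hmono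
      have hsX : (0:ℝ) < s ^ (μ-1-1) := Real.rpow_pos_of_pos hs _
      have huX : (0:ℝ) < u ^ (μ-1-1) := Real.rpow_pos_of_pos hupos _
      have step : c2 * s ^ (μ-1-1) * u ^ (μ-1-1) ≤ (1+s) ^ (μ-1-1) * u ^ (μ-1-1) := by
        calc c2 * s ^ (μ-1-1) * u ^ (μ-1-1) = c2 * u ^ (μ-1-1) * s ^ (μ-1-1) := by ring
          _ ≤ (1+u) ^ (μ-1-1) * s ^ (μ-1-1) := mul_le_mul_of_nonneg_right h1 hsX.le
          _ ≤ (1+s) ^ (μ-1-1) * u ^ (μ-1-1) := hmono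
      have hfinal : c2 * s ^ (μ-1-1) ≤ (1+s) ^ (μ-1-1) := (mul_le_mul_iff_of_pos_right huX).mp step
      simp only [hH2def]
      nlinarith [hfinal]
    have hbdd : BddAbove (insert (0:ℝ) {x : ℝ | x ∈ Ioo (0:ℝ) 1 ∧ 0 < H2 x}) := by
      refine ⟨1, ?_⟩
      rintro x (rfl | hx)
      · norm_num
      · exact hx.1.2.le
    have hne : (insert (0:ℝ) {x : ℝ | x ∈ Ioo (0:ℝ) 1 ∧ 0 < H2 x}).Nonempty :=
      ⟨0, mem_insert _ _⟩
    set τ := sSup (insert (0:ℝ) {x : ℝ | x ∈ Ioo (0:ℝ) 1 ∧ 0 < H2 x}) with hτdef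
    have hτ0 : 0 ≤ τ := le_csSup hbdd (mem_insert _ _)
    have hτ1 : τ ≤ 1 := by
      apply csSup_le hne
      rintro x (rfl | hx)
      · norm_num
      · exact hx.1.2.le
    have fact1 : ∀ x, τ < x → x < 1 → H2 x ≤ 0 := by
      intro x hx1 hx2
      by_contra hcon
      push_neg at hcon
      have hmem : x ∈ insert (0:ℝ) {x : ℝ | x ∈ Ioo (0:ℝ) 1 ∧ 0 < H2 x} :=
        mem_insert_of_mem _ ⟨⟨lt_of_le_of_lt hτ0 hx1, hx2⟩, hcon⟩
      exact absurd (le_csSup hbdd hmem) (not_le.mpr hx1)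
    have fact2 : ∀ x, 0 < x → x < τ → 0 ≤ H2 x := by
      intro x hx1 hx2
      obtain ⟨s, hs, hxs⟩ := exists_lt_of_lt_csSup hne hx2
      rcases hs with rfl | hs
      · linarith
      · exact DC x s hx1 hxs.le hs.2.le
    have monoH1 : MonotoneOn H1 (Icc 0 τ) := by
      apply monotoneOn_of_deriv_nonneg (convex_Icc _ _) contH1.continuousOn
      · intro x hx
        rw [interior_Icc] at hx
        exact (hasH1 x hx.1).differentiableAt.differentiableWithinAt
      · intro x hx
        rw [interior_Icc] at hx
        rw [(hasH1 x hx.1).deriv]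
        exact fact2 x hx.1 hx.2
    have H1nn : ∀ x ∈ Icc (0:ℝ) τ, 0 ≤ H1 x := by
      intro x hx
      have := monoH1 (left_mem_Icc.mpr hτ0) hx hx.1
      rw [hH1_0] at this
      linarith [hμc1]
    have monoH : MonotoneOn H (Icc 0 τ) := by
      apply monotoneOn_of_deriv_nonneg (convex_Icc _ _) contH.continuousOn
      · intro x hx
        rw [interior_Icc] at hx
        exact (hasH x hx.1.le).differentiableAt.differentiableWithinAt
      · intro x hx
        rw [interior_Icc] at hx
        rw [(hasH x hx.1.le).deriv]
        exact H1nn x ⟨hx.1.le, hx.2.le⟩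
    have Hnn1 : ∀ x ∈ Icc (0:ℝ) τ, 0 ≤ H x := by
      intro x hx
      have := monoH (left_mem_Icc.mpr hτ0) hx hx.1
      rwa [hH0] at this
    have antiH1 : AntitoneOn H1 (Ioo τ 1) := by
      apply antitoneOn_of_deriv_nonpos (convex_Ioo _ _) contH1.continuousOn
      · intro x hx
        rw [isOpen_Ioo.interior_eq] at hx
        exact (hasH1 x (lt_of_le_of_lt hτ0 hx.1)).differentiableAt.differentiableWithinAt
      · intro x hx
        rw [isOpen_Ioo.interior_eq] at hx
        rw [(hasH1 x (lt_of_le_of_lt hτ0 hx.1)).deriv]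
        exact fact1 x hx.1 hx.2
    have concH : ConcaveOn ℝ (Icc τ 1) H := by
      apply AntitoneOn.concaveOn_of_deriv (convex_Icc _ _) contH.continuousOn
      · intro x hx
        rw [interior_Icc] at hx
        exact (hasH x (hτ0.trans hx.1.le)).differentiableAt.differentiableWithinAt
      · intro a ha b hb hab
        rw [interior_Icc] at ha hb
        rw [(hasH a (hτ0.trans ha.1.le)).deriv, (hasH b (hτ0.trans hb.1.le)).deriv]
        exact antiH1 ha hb hab
    have Hnn2 : ∀ x ∈ Icc τ 1, 0 ≤ H x := by
      intro x hx
      have hmin := concave_min hτ1 concH hx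
      have hHτ : 0 ≤ H τ := Hnn1 τ (right_mem_Icc.mpr hτ0)
      rw [hH1v] at hmin
      exact le_trans (le_min hHτ le_rfl) hmin
    rcases le_total t τ with h | h
    · exact Hnn1 t ⟨ht0, h⟩
    · exact Hnn2 t ⟨h, ht1⟩
  · -- case μ ≤ 2
    have hμμ : 0 < μ * (μ - 1) := by nlinarith
    have hXnp : μ - 1 - 1 ≤ 0 := by linarith
    have UC : ∀ s u : ℝ, 0 < s → s ≤ u → 0 ≤ H2 s → 0 ≤ H2 u := by
      intro s u hs hsu hH2s
      have hupos : 0 < u := lt_of_lt_of_le hs hsu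
      have h1 : c2 * s ^ (μ-1-1) ≤ (1+s) ^ (μ-1-1) := by
        simp only [hH2def] at hH2s
        nlinarith [hH2s]
      have hmono : ((1+s)*u) ^ (μ-1-1) ≤ ((1+u)*s) ^ (μ-1-1) :=
        Real.rpow_le_rpow_of_nonpos (by positivity) (by nlinarith) hXnp
      rw [Real.mul_rpow (by positivity) hs.le, Real.mul_rpow (by positivity) hupos.le] at hmono
      have hsX : (0:ℝ) < s ^ (μ-1-1) := Real.rpow_pos_of_pos hs _
      have huX : (0:ℝ) < u ^ (μ-1-1) := Real.rpow_pos_of_pos hupos _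
      have step : c2 * u ^ (μ-1-1) * s ^ (μ-1-1) ≤ (1+u) ^ (μ-1-1) * s ^ (μ-1-1) := by
        calc c2 * u ^ (μ-1-1) * s ^ (μ-1-1) = c2 * s ^ (μ-1-1) * u ^ (μ-1-1) := by ring
          _ ≤ (1+s) ^ (μ-1-1) * u ^ (μ-1-1) := mul_le_mul_of_nonneg_right h1 huX.le
          _ ≤ (1+u) ^ (μ-1-1) * s ^ (μ-1-1) := hmono
      have hfinal : c2 * u ^ (μ-1-1) ≤ (1+u) ^ (μ-1-1) := (mul_le_mul_iff_of_pos_right hsX).mp step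
      simp only [hH2def]
      nlinarith [hfinal]
    have hbdd : BddAbove (insert (0:ℝ) {x : ℝ | x ∈ Ioo (0:ℝ) 1 ∧ H2 x < 0}) := by
      refine ⟨1, ?_⟩
      rintro x (rfl | hx)
      · norm_num
      · exact hx.1.2.le
    have hne : (insert (0:ℝ) {x : ℝ | x ∈ Ioo (0:ℝ) 1 ∧ H2 x < 0}).Nonempty :=
      ⟨0, mem_insert _ _⟩
    set τ := sSup (insert (0:ℝ) {x : ℝ | x ∈ Ioo (0:ℝ) 1 ∧ H2 x < 0}) with hτdef
    have hτ0 : 0 ≤ τ := le_csSup hbdd (mem_insert _ _)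
    have hτ1 : τ ≤ 1 := by
      apply csSup_le hne
      rintro x (rfl | hx)
      · norm_num
      · exact hx.1.2.le
    have fact1 : ∀ x, τ < x → x < 1 → 0 ≤ H2 x := by
      intro x hx1 hx2
      by_contra hcon
      push_neg at hcon
      have hmem : x ∈ insert (0:ℝ) {x : ℝ | x ∈ Ioo (0:ℝ) 1 ∧ H2 x < 0} :=
        mem_insert_of_mem _ ⟨⟨lt_of_le_of_lt hτ0 hx1, hx2⟩, hcon⟩
      exact absurd (le_csSup hbdd hmem) (not_le.mpr hx1)
    have fact2 : ∀ x, 0 < x → x < τ → H2 x ≤ 0 := by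
      intro x hx1 hx2
      obtain ⟨s, hs, hxs⟩ := exists_lt_of_lt_csSup hne hx2
      rcases hs with rfl | hs
      · linarith
      · by_contra hcon
        push_neg at hcon
        exact absurd (UC x s hx1 hxs.le hcon.le) (not_le.mpr hs.2)
    have monoH1 : MonotoneOn H1 (Icc τ 1) := by
      apply monotoneOn_of_deriv_nonneg (convex_Icc _ _) contH1.continuousOn
      · intro x hx
        rw [interior_Icc] at hx
        exact (hasH1 x (lt_of_le_of_lt hτ0 hx.1)).differentiableAt.differentiableWithinAt
      · intro x hx
        rw [interior_Icc] at hx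
        rw [(hasH1 x (lt_of_le_of_lt hτ0 hx.1)).deriv]
        exact fact1 x hx.1 hx.2
    have H1np : ∀ x ∈ Icc τ 1, H1 x ≤ 0 := by
      intro x hx
      have := monoH1 hx (right_mem_Icc.mpr hτ1) hx.2
      linarith [hH1_1]
    have antiH : AntitoneOn H (Icc τ 1) := by
      apply antitoneOn_of_deriv_nonpos (convex_Icc _ _) contH.continuousOn
      · intro x hx
        rw [interior_Icc] at hx
        exact (hasH x (hτ0.trans hx.1.le)).differentiableAt.differentiableWithinAt
      · intro x hx
        rw [interior_Icc] at hx
        rw [(hasH x (hτ0.trans hx.1.le)).deriv]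
        exact H1np x ⟨hx.1.le, hx.2.le⟩
    have Hnn2 : ∀ x ∈ Icc τ 1, 0 ≤ H x := by
      intro x hx
      have := antiH hx (right_mem_Icc.mpr hτ1) hx.2
      rwa [hH1v] at this
    have antiH1 : AntitoneOn H1 (Ioo 0 τ) := by
      apply antitoneOn_of_deriv_nonpos (convex_Ioo _ _) contH1.continuousOn
      · intro x hx
        rw [isOpen_Ioo.interior_eq] at hx
        exact (hasH1 x hx.1).differentiableAt.differentiableWithinAt
      · intro x hx
        rw [isOpen_Ioo.interior_eq] at hx
        rw [(hasH1 x hx.1).deriv]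
        exact fact2 x hx.1 hx.2
    have concH : ConcaveOn ℝ (Icc 0 τ) H := by
      apply AntitoneOn.concaveOn_of_deriv (convex_Icc _ _) contH.continuousOn
      · intro x hx
        rw [interior_Icc] at hx
        exact (hasH x hx.1.le).differentiableAt.differentiableWithinAt
      · intro a ha b hb hab
        rw [interior_Icc] at ha hb
        rw [(hasH a ha.1.le).deriv, (hasH b hb.1.le).deriv]
        exact antiH1 ha hb hab
    have Hnn1 : ∀ x ∈ Icc (0:ℝ) τ, 0 ≤ H x := by
      intro x hx
      have hmin := concave_min hτ0 concH hx
      have hHτ : 0 ≤ H τ := Hnn2 τ (left_mem_Icc.mpr hτ1)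
      rw [hH0] at hmin
      exact le_trans (le_min le_rfl hHτ) hmin
    rcases le_total t τ with h | h
    · exact Hnn1 t ⟨ht0, h⟩
    · exact Hnn2 t ⟨h, ht1⟩

lemma powerB {μ : ℝ} (hμ : 1 ≤ μ) {a b : ℝ} (hb : 0 ≤ b) (hba : b ≤ a) :
    a ^ μ + (μ^2/(μ+1)) * a^(μ-1) * b + (2^μ - μ^2/(μ+1) - 1) * b^μ ≤ (a+b)^μ := by
  have hμpos : (0:ℝ) < μ := by linarith
  rcases eq_or_lt_of_le (hb.trans hba) with h0 | ha
  · -- a = 0, hence b = 0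
    have hb0 : b = 0 := le_antisymm (h0 ▸ hba) hb
    rw [← h0, hb0]
    simp [Real.zero_rpow hμpos.ne']
  · -- 0 < a
    set t := b / a with htdef
    have ht0 : 0 ≤ t := div_nonneg hb ha.le
    have ht1 : t ≤ 1 := (div_le_one ha).mpr hba
    have key := Hineq hμ ht0 ht1
    have haμ : (0:ℝ) < a ^ μ := Real.rpow_pos_of_pos ha μ
    have hmul := mul_le_mul_of_nonneg_left key haμ.le
    have e1 : a ^ μ * (1+t) ^ μ = (a+b) ^ μ := by
      rw [← Real.mul_rpow ha.le (by linarith : (0:ℝ) ≤ 1 + t)]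
      congr 1
      rw [htdef]
      field_simp
    have e2 : a ^ μ * t ^ μ = b ^ μ := by
      rw [← Real.mul_rpow ha.le ht0]
      congr 1
      rw [htdef]
      field_simp
    have e3 : a ^ μ * t = a ^ (μ-1) * b := by
      rw [Real.rpow_sub_one ha.ne' μ, htdef]
      field_simp
    calc a ^ μ + (μ^2/(μ+1)) * a^(μ-1) * b + (2^μ - μ^2/(μ+1) - 1) * b^μ
        = a ^ μ * (1 + (μ^2/(μ+1)) * t + (2^μ - μ^2/(μ+1) - 1) * t^μ) := by
          rw [show a ^ μ * (1 + (μ^2/(μ+1)) * t + (2^μ - μ^2/(μ+1) - 1) * t^μ)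
            = a ^ μ + (μ^2/(μ+1)) * (a ^ μ * t) + (2^μ - μ^2/(μ+1) - 1) * (a ^ μ * t ^ μ) by ring,
            e2, e3]
          ring
      _ ≤ a ^ μ * (1+t) ^ μ := hmul
      _ = (a+b) ^ μ := e1

lemma F_anti {r : ℝ} (hr1 : 1 ≤ r) (hr2 : r ≤ 2) :
    AntitoneOn (fun u : ℝ => (((1+u)/2) ^ r - ((1-u)/2) ^ r) / u) (Ioo 0 1) := by
  have hasF : ∀ u ∈ Ioo (0:ℝ) 1, HasDerivAt
      (fun u : ℝ => (((1+u)/2) ^ r - ((1-u)/2) ^ r) / u)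
      (((r * ((1+u)/2) ^ (r-1) * (1/2) - r * ((1-u)/2) ^ (r-1) * (-1/2)) * u
        - (((1+u)/2) ^ r - ((1-u)/2) ^ r) * 1) / u ^ 2) u := by
    intro u hu
    have hApos : (0:ℝ) < (1+u)/2 := by cases hu; linarith
    have hBpos : (0:ℝ) < (1-u)/2 := by cases hu; linarith
    have hA : HasDerivAt (fun u : ℝ => (1+u)/2) (1/2) u := by
      have := ((hasDerivAt_id u).const_add (1:ℝ)).div_const 2
      simpa using this
    have hB : HasDerivAt (fun u : ℝ => (1-u)/2) (-1/2) u := by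
      have := ((hasDerivAt_id u).const_sub (1:ℝ)).div_const 2
      exact this
    have hApow : HasDerivAt (fun u : ℝ => ((1+u)/2) ^ r) (r * ((1+u)/2) ^ (r-1) * (1/2)) u :=
      by have := (Real.hasDerivAt_rpow_const (p := r) (Or.inl hApos.ne')).comp u hA; exact this
    have hBpow : HasDerivAt (fun u : ℝ => ((1-u)/2) ^ r) (r * ((1-u)/2) ^ (r-1) * (-1/2)) u :=
      by have := (Real.hasDerivAt_rpow_const (p := r) (Or.inl hBpos.ne')).comp u hB; exact this
    exact (hApow.sub hBpow).div (hasDerivAt_id u) (ne_of_gt hu.1)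
  apply antitoneOn_of_deriv_nonpos (convex_Ioo _ _)
  · exact fun u hu => ((hasF u hu).continuousAt).continuousWithinAt
  · intro u hu
    rw [isOpen_Ioo.interior_eq] at hu
    exact (hasF u hu).differentiableAt.differentiableWithinAt
  · intro u hu
    rw [isOpen_Ioo.interior_eq] at hu
    rw [(hasF u hu).deriv]
    apply div_nonpos_of_nonpos_of_nonneg _ (sq_nonneg u)
    have hBpos : (0:ℝ) < (1-u)/2 := by cases hu; linarith
    have hBA : (1-u)/2 ≤ (1+u)/2 := by cases hu; linarith
    have h2 := I2 hr1 hr2 hBpos hBA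
    have he : (1+u)/2 - (1-u)/2 = u := by ring
    rw [he] at h2
    nlinarith [h2]

noncomputable def GG (q t : ℝ) : ℝ :=
  (1 / (q - 1)) * (1 - ((1 + Real.sqrt (1 - t)) / 2) ^ q - ((1 - Real.sqrt (1 - t)) / 2) ^ q)

noncomputable def GG' (q t : ℝ) : ℝ :=
  (q / (4 * (q - 1))) * ((((1 + Real.sqrt (1 - t)) / 2) ^ (q - 1)
    - ((1 - Real.sqrt (1 - t)) / 2) ^ (q - 1)) / Real.sqrt (1 - t))

lemma sqrt_mem {t : ℝ} (ht : t ∈ Ioo (0:ℝ) 1) : Real.sqrt (1 - t) ∈ Ioo (0:ℝ) 1 := by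
  obtain ⟨ht0, ht1⟩ := ht
  constructor
  · exact Real.sqrt_pos.mpr (by linarith)
  · have h := Real.sqrt_lt_sqrt (by linarith : (0:ℝ) ≤ 1 - t) (by linarith : 1 - t < 1)
    simpa using h

lemma GG_hasDeriv {q : ℝ} (hq : 1 < q) {t : ℝ} (ht : t ∈ Ioo (0:ℝ) 1) :
    HasDerivAt (GG q) (GG' q t) t := by
  obtain ⟨hu0, hu1⟩ := sqrt_mem ht
  obtain ⟨ht0, ht1⟩ := ht
  have h1t : (0:ℝ) < 1 - t := by linarith
  have hApos : (0:ℝ) < (1 + Real.sqrt (1 - t)) / 2 := by linarith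
  have hBpos : (0:ℝ) < (1 - Real.sqrt (1 - t)) / 2 := by linarith
  have hsub : HasDerivAt (fun t : ℝ => 1 - t) (-1) t := by
    simpa using (hasDerivAt_id t).const_sub (1:ℝ)
  have hsq : HasDerivAt (fun t : ℝ => Real.sqrt (1 - t))
      (1 / (2 * Real.sqrt (1 - t)) * (-1)) t :=
    (Real.hasDerivAt_sqrt h1t.ne').comp t hsub
  have hA : HasDerivAt (fun t : ℝ => (1 + Real.sqrt (1 - t)) / 2)
      ((1 / (2 * Real.sqrt (1 - t)) * (-1)) / 2) t := (hsq.const_add 1).div_const 2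
  have hB : HasDerivAt (fun t : ℝ => (1 - Real.sqrt (1 - t)) / 2)
      (-(1 / (2 * Real.sqrt (1 - t)) * (-1)) / 2) t := (hsq.const_sub 1).div_const 2
  have hApow : HasDerivAt (fun t : ℝ => ((1 + Real.sqrt (1 - t)) / 2) ^ q)
      (q * ((1 + Real.sqrt (1 - t)) / 2) ^ (q - 1) * ((1 / (2 * Real.sqrt (1 - t)) * (-1)) / 2)) t :=
    by have := (Real.hasDerivAt_rpow_const (p := q) (Or.inl hApos.ne')).comp t hA; exact this
  have hBpow : HasDerivAt (fun t : ℝ => ((1 - Real.sqrt (1 - t)) / 2) ^ q)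
      (q * ((1 - Real.sqrt (1 - t)) / 2) ^ (q - 1) * (-(1 / (2 * Real.sqrt (1 - t)) * (-1)) / 2)) t :=
    by have := (Real.hasDerivAt_rpow_const (p := q) (Or.inl hBpos.ne')).comp t hB; exact this
  have hfin := ((hApow.const_sub 1).sub hBpow).const_mul (1 / (q - 1))
  unfold GG GG'
  refine hfin.congr_deriv ?_
  have hq1 : q - 1 ≠ 0 := by linarith
  field_simp
  ring

lemma GG_cont {q : ℝ} (hq : 0 < q) : Continuous (GG q) := by
  unfold GG
  have hs : Continuous (fun t : ℝ => Real.sqrt (1 - t)) :=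
    Real.continuous_sqrt.comp (continuous_const.sub continuous_id)
  apply Continuous.mul continuous_const
  apply Continuous.sub
  apply Continuous.sub continuous_const
  · exact (cpow_cont hq.le).comp ((continuous_const.add hs).div_const 2)
  · exact (cpow_cont hq.le).comp ((continuous_const.sub hs).div_const 2)

lemma GG'_mono {q : ℝ} (hq2 : 2 ≤ q) (hq3 : q ≤ 3) :
    MonotoneOn (GG' q) (Ioo (0:ℝ) 1) := by
  intro s hs t ht hst
  have hKnn : (0:ℝ) ≤ q / (4 * (q - 1)) := by
    apply div_nonneg (by linarith)
    linarith
  have hus := sqrt_mem hs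
  have hut := sqrt_mem ht
  have hmono : Real.sqrt (1 - t) ≤ Real.sqrt (1 - s) :=
    Real.sqrt_le_sqrt (by linarith)
  have hF := F_anti (r := q - 1) (by linarith) (by linarith) hut hus hmono
  unfold GG'
  exact mul_le_mul_of_nonneg_left hF hKnn

lemma GG'_nonneg {q : ℝ} (hq2 : 2 ≤ q) {t : ℝ} (ht : t ∈ Ioo (0:ℝ) 1) :
    0 ≤ GG' q t := by
  obtain ⟨hu0, hu1⟩ := sqrt_mem ht
  have hKnn : (0:ℝ) ≤ q / (4 * (q - 1)) := by
    apply div_nonneg (by linarith)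
    linarith
  apply mul_nonneg hKnn
  apply div_nonneg _ hu0.le
  rw [sub_nonneg]
  apply Real.rpow_le_rpow (by linarith) (by linarith) (by linarith)

lemma GG_convex {q : ℝ} (hq2 : 2 ≤ q) (hq3 : q ≤ 3) :
    ConvexOn ℝ (Icc (0:ℝ) 1) (GG q) := by
  apply MonotoneOn.convexOn_of_deriv (convex_Icc _ _) (GG_cont (by linarith)).continuousOn
  · intro x hx
    rw [interior_Icc] at hx
    exact (GG_hasDeriv (by linarith) hx).differentiableAt.differentiableWithinAt
  · intro a ha b hb hab
    rw [interior_Icc] at ha hb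
    rw [(GG_hasDeriv (by linarith) ha).deriv, (GG_hasDeriv (by linarith) hb).deriv]
    exact GG'_mono hq2 hq3 ha hb hab

lemma GG_mono {q : ℝ} (hq2 : 2 ≤ q) (hq3 : q ≤ 3) :
    MonotoneOn (GG q) (Icc (0:ℝ) 1) := by
  apply monotoneOn_of_deriv_nonneg (convex_Icc _ _) (GG_cont (by linarith)).continuousOn
  · intro x hx
    rw [interior_Icc] at hx
    exact (GG_hasDeriv (by linarith) hx).differentiableAt.differentiableWithinAt
  · intro x hx
    rw [interior_Icc] at hx
    rw [(GG_hasDeriv (by linarith) hx).deriv]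
    exact GG'_nonneg hq2 hx

lemma GG_zero {q : ℝ} (hq : 0 < q) : GG q 0 = 0 := by
  unfold GG
  norm_num [Real.sqrt_one, Real.one_rpow, Real.zero_rpow hq.ne']

lemma GG_superadd {q : ℝ} (hq2 : 2 ≤ q) (hq3 : q ≤ 3) {s t : ℝ}
    (hs : 0 ≤ s) (ht : 0 ≤ t) (hst : s + t ≤ 1) :
    GG q s + GG q t ≤ GG q (s + t) := by
  have hconv := GG_convex hq2 hq3
  rcases eq_or_lt_of_le hs with rfl | hs'
  · rw [GG_zero (by linarith)]
    simp
  rcases eq_or_lt_of_le ht with rfl | ht'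
  · rw [GG_zero (by linarith)]
    simp
  have hst0 : 0 < s + t := by linarith
  have hmemst : s + t ∈ Icc (0:ℝ) 1 := ⟨by linarith, hst⟩
  have hmem0 : (0:ℝ) ∈ Icc (0:ℝ) 1 := ⟨le_refl _, by norm_num⟩
  have key : ∀ a : ℝ, 0 < a → a ≤ s + t → GG q a ≤ (a / (s+t)) * GG q (s+t) := by
    intro a ha has
    have h1 : 0 ≤ a / (s+t) := by positivity
    have h2 : 0 ≤ 1 - a / (s+t) := by
      rw [sub_nonneg, div_le_one hst0]
      exact has
    have := hconv.2 hmemst hmem0 h1 h2 (by ring)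
    rw [smul_eq_mul, smul_eq_mul, smul_eq_mul, smul_eq_mul] at this
    rw [GG_zero (by linarith)] at this
    have he : a / (s+t) * (s+t) + (1 - a/(s+t)) * 0 = a := by
      field_simp
      ring
    rw [he] at this
    linarith
  have h1 := key s hs' (by linarith)
  have h2 := key t ht' (by linarith)
  have : s / (s+t) * GG q (s+t) + t / (s+t) * GG q (s+t) = GG q (s+t) := by
    field_simp
  linarith

lemma GG_nonneg {q : ℝ} (hq2 : 2 ≤ q) (hq3 : q ≤ 3) {t : ℝ} (ht : t ∈ Icc (0:ℝ) 1) :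
    0 ≤ GG q t := by
  have := GG_mono hq2 hq3 (⟨le_refl 0, by norm_num⟩ : (0:ℝ) ∈ Icc (0:ℝ) 1) ht ht.1
  rwa [GG_zero (by linarith)] at this

theorem stmt_9 (q μ : ℝ) (hq2 : 2 ≤ q) (hq3 : q ≤ 3) (hμ : 1 ≤ μ)
    (x y : ℝ) (hx : x ∈ Set.Icc (0 : ℝ) 1) (hy : y ∈ Set.Icc (0 : ℝ) 1)
    (hxy : y ≤ x) (hsum : x ^ 2 + y ^ 2 ≤ 1)
    (g : ℝ → ℝ)
    (hg : ∀ t, g t = (1 / (q - 1)) * (1 - ((1 + Real.sqrt (1 - t)) / 2) ^ q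
      - ((1 - Real.sqrt (1 - t)) / 2) ^ q)) :
    g (x ^ 2 + y ^ 2) ^ μ ≥
      g (x ^ 2) ^ μ + (μ ^ 2 / (μ + 1)) * g (x ^ 2) ^ (μ - 1) * g (y ^ 2)
        + (2 ^ μ - μ ^ 2 / (μ + 1) - 1) * g (y ^ 2) ^ μ := by
  have hgG : ∀ t, g t = GG q t := fun t => by rw [hg t]; rfl
  simp only [hgG]
  obtain ⟨hx0, hx1⟩ := hx
  obtain ⟨hy0, hy1⟩ := hy
  have hx2 : x ^ 2 ∈ Icc (0:ℝ) 1 := ⟨by positivity, by nlinarith⟩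
  have hy2 : y ^ 2 ∈ Icc (0:ℝ) 1 := ⟨by positivity, by nlinarith⟩
  have hb0 : 0 ≤ GG q (y ^ 2) := GG_nonneg hq2 hq3 hy2
  have ha0 : 0 ≤ GG q (x ^ 2) := GG_nonneg hq2 hq3 hx2
  have hba : GG q (y ^ 2) ≤ GG q (x ^ 2) :=
    GG_mono hq2 hq3 hy2 hx2 (by nlinarith : y ^ 2 ≤ x ^ 2)
  have hsuper : GG q (x ^ 2) + GG q (y ^ 2) ≤ GG q (x ^ 2 + y ^ 2) :=
    GG_superadd hq2 hq3 (by positivity) (by positivity) hsum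
  have hPB := powerB hμ hb0 hba
  have hmono : (GG q (x ^ 2) + GG q (y ^ 2)) ^ μ ≤ GG q (x ^ 2 + y ^ 2) ^ μ :=
    Real.rpow_le_rpow (by linarith) hsuper (by linarith)
  exact le_trans hPB hmono
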